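/- arXiv:1410.7635 — 3 statements merged into one kernel-verified Lean document; each statement's English description precedes it below -/
import Mathlib

section
/- There is a constant c > 0 such that for all n ∈ ℕ, all N ∈ ℕ, and all x ∈ I_s \ I_{s+1} with 0 ≤ s ≤ N−1, one has ∫_{I_N} |D_n(x − t)| dμ(t) ≤ c · 2^s / 2^N, where D_n is the Walsh-Paley Dirichlet kernel. -/
open MeasureTheory ENNReal Filter
open scoped Classical

noncomputable section

instance : TopologicalSpace (ZMod 2) := ⊥
instance : DiscreteTopology (ZMod 2) := ⟨rfl⟩
instance : MeasurableSpace (ZMod 2) := ⊤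
instance : BorelSpace (ZMod 2) := ⟨borel_eq_top_of_discrete.symm⟩
instance : IsTopologicalAddGroup (ZMod 2) where
  continuous_add := continuous_of_discreteTopology
  continuous_neg := continuous_of_discreteTopology

/-- The dyadic group `G = (ℤ/2)^ℕ`. -/
abbrev G2 : Type := ℕ → ZMod 2

/-- Normalized Haar (probability) measure on `G2`. -/
def muG : Measure G2 :=
  Measure.addHaarMeasure ⟨⟨Set.univ, isCompact_univ⟩, by
    rw [interior_univ]; exact Set.univ_nonempty⟩

/-- Rademacher functions. -/
def rad (k : ℕ) (x : G2) : ℝ := (-1 : ℝ) ^ ((x k).val)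

/-- Walsh–Paley functions. -/
def walsh (n : ℕ) (x : G2) : ℝ :=
  ∏ k ∈ Finset.range n, if n.testBit k then rad k x else 1

/-- Walsh–Dirichlet kernels. -/
def dirichlet (n : ℕ) (x : G2) : ℝ := ∑ k ∈ Finset.range n, walsh k x

/-- The cylinder sets `I_n`. -/
def cyl (n : ℕ) : Set G2 := {x | ∀ i < n, x i = 0}

/-- Walsh–Fourier coefficients. -/
def fhat (f : G2 → ℝ) (k : ℕ) : ℝ := ∫ x, f x * walsh k x ∂muG

/-- Walsh–Fourier partial sums of a function. -/
def funS (f : G2 → ℝ) (n : ℕ) (x : G2) : ℝ :=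
  ∑ k ∈ Finset.range n, fhat f k * walsh k x

/-- Partial sums of the Walsh series of a dyadic martingale given by coefficients `c`. -/
def mS (c : ℕ → ℝ) (n : ℕ) (x : G2) : ℝ := ∑ k ∈ Finset.range n, c k * walsh k x

/-- The martingale maximal function. -/
def mMax (c : ℕ → ℝ) (x : G2) : ℝ≥0∞ := ⨆ n : ℕ, (‖mS c (2 ^ n) x‖₊ : ℝ≥0∞)

/-- The martingale Hardy space quasi-norm `H_p`. -/
def mHp (p : ℝ) (c : ℕ → ℝ) : ℝ≥0∞ := (∫⁻ x, (mMax c x) ^ p ∂muG) ^ (1 / p)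

/-- The maximal function of an integrable function. -/
def funMax (f : G2 → ℝ) (x : G2) : ℝ≥0∞ := ⨆ n : ℕ, (‖funS f (2 ^ n) x‖₊ : ℝ≥0∞)

/-- The Hardy space quasi-norm of an integrable function. -/
def funHp (p : ℝ) (f : G2 → ℝ) : ℝ≥0∞ := (∫⁻ x, (funMax f x) ^ p ∂muG) ^ (1 / p)

/-- Weak `L^p` quasi-norm. -/
def weakLp (p : ℝ) (f : G2 → ℝ) : ℝ≥0∞ :=
  ⨆ t : NNReal, (t : ℝ≥0∞) * (muG {x | (t : ℝ) < |f x|}) ^ (1 / p)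


/-! ### Auxiliary lemmas -/

lemma walsh_eq_prod (n M : ℕ) (h : n ≤ M) (x : G2) :
    walsh n x = ∏ k ∈ Finset.range M, if n.testBit k then rad k x else 1 := by
  unfold walsh
  refine Finset.prod_subset (Finset.range_subset_range.mpr h) ?_
  intro i _ hi
  simp only [Finset.mem_range, not_lt] at hi
  have : n < 2 ^ i := lt_of_lt_of_le (Nat.lt_two_pow_self (n := n)) (Nat.pow_le_pow_right (by norm_num) hi)
  rw [Nat.testBit_eq_false_of_lt this]
  simp

lemma rad_abs (k : ℕ) (x : G2) : |rad k x| = 1 := by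
  unfold rad; rw [abs_pow, abs_neg, abs_one, one_pow]

lemma rad_eq_neg_one {k : ℕ} {x : G2} (h : x k ≠ 0) : rad k x = -1 := by
  unfold rad
  have h1 : (x k).val ≠ 0 := by
    simpa [ZMod.val_eq_zero] using h
  have h2 : (x k).val < 2 := (x k).val_lt
  have : (x k).val = 1 := by omega
  rw [this, pow_one]

lemma walsh_two_pow_add {m j : ℕ} (hj : j < 2 ^ m) (x : G2) :
    walsh (2 ^ m + j) x = rad m x * walsh j x := by
  set M := 2 ^ m + j with hM
  have hmM : m ∈ Finset.range M := by
    have := Nat.lt_two_pow_self (n := m)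
    simp only [Finset.mem_range, hM]; omega
  rw [walsh_eq_prod (2 ^ m + j) M le_rfl x, walsh_eq_prod j M (by omega) x,
    ← Finset.mul_prod_erase _ _ hmM, ← Finset.mul_prod_erase _ _ hmM]
  have hb1 : (2 ^ m + j).testBit m = true := by
    rw [Nat.testBit_two_pow_add_eq, Nat.testBit_eq_false_of_lt hj]; rfl
  have hb2 : j.testBit m = false := Nat.testBit_eq_false_of_lt hj
  simp only [hb1, hb2, Bool.false_eq_true, if_true, if_false, one_mul]
  refine congrArg _ (Finset.prod_congr rfl fun i hi => ?_)
  have him : i ≠ m := (Finset.mem_erase.mp hi).1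
  rcases lt_or_gt_of_ne him with h' | h'
  · rw [Nat.testBit_two_pow_add_gt h']
  · have h1 : 2 ^ m + j < 2 ^ i := by
      have hle : 2 ^ (m + 1) ≤ 2 ^ i := Nat.pow_le_pow_right (by norm_num) h'
      have h3 : 2 ^ (m + 1) = 2 ^ m + 2 ^ m := by ring
      omega
    have h2 : j < 2 ^ i := by omega
    rw [Nat.testBit_eq_false_of_lt h1, Nat.testBit_eq_false_of_lt h2]

lemma dirichlet_rec {m j : ℕ} (hj : j ≤ 2 ^ m) (x : G2) :
    dirichlet (2 ^ m + j) x = dirichlet (2 ^ m) x + rad m x * dirichlet j x := by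
  unfold dirichlet
  rw [Finset.sum_range_add, Finset.mul_sum]
  congr 1
  refine Finset.sum_congr rfl ?_
  intro i hi
  exact walsh_two_pow_add (lt_of_lt_of_le (Finset.mem_range.mp hi) hj) x

lemma dirichlet_two_pow (m : ℕ) (x : G2) :
    dirichlet (2 ^ m) x = ∏ i ∈ Finset.range m, (1 + rad i x) := by
  induction m with
  | zero => simp [dirichlet, walsh]
  | succ m ih =>
    have h2 : (2 : ℕ) ^ (m + 1) = 2 ^ m + 2 ^ m := by ring
    rw [h2, dirichlet_rec le_rfl x, Finset.prod_range_succ, ih]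
    ring

lemma abs_dirichlet_two_pow_le (m : ℕ) (x : G2) : |dirichlet (2 ^ m) x| ≤ 2 ^ m := by
  rw [dirichlet_two_pow, Finset.abs_prod]
  calc ∏ i ∈ Finset.range m, |1 + rad i x| ≤ ∏ i ∈ Finset.range m, 2 := by
        refine Finset.prod_le_prod (fun i _ => abs_nonneg _) (fun i _ => ?_)
        calc |1 + rad i x| ≤ |(1:ℝ)| + |rad i x| := abs_add_le _ _
          _ = 2 := by rw [rad_abs, abs_one]; norm_num
    _ = 2 ^ m := by rw [Finset.prod_const, Finset.card_range]

lemma dirichlet_two_pow_eq_zero {m s : ℕ} (h : s < m) {x : G2} (hx : x s ≠ 0) :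
    dirichlet (2 ^ m) x = 0 := by
  rw [dirichlet_two_pow]
  refine Finset.prod_eq_zero (Finset.mem_range.mpr h) ?_
  rw [rad_eq_neg_one hx]; ring

lemma abs_dirichlet_le_sum {s : ℕ} {x : G2} (hx : x s ≠ 0) (n : ℕ) :
    |dirichlet n x| ≤ ∑ i ∈ Finset.range (s + 1), if n.testBit i then (2:ℝ) ^ i else 0 := by
  induction n using Nat.strong_induction_on with
  | _ n ih =>
    rcases Nat.eq_zero_or_pos n with h0 | hpos
    · subst h0; simp [dirichlet]
    · set m := Nat.log 2 n with hm
      have h1 : 2 ^ m ≤ n := Nat.pow_log_le_self 2 hpos.ne'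
      have h2 : n < 2 ^ (m + 1) := Nat.lt_pow_succ_log_self (by norm_num) n
      set j := n - 2 ^ m with hjdef
      have hn : n = 2 ^ m + j := by omega
      have hj : j < 2 ^ m := by
        have : 2 ^ (m + 1) = 2 ^ m + 2 ^ m := by ring
        omega
      have hjn : j < n := by
        have : 0 < 2 ^ m := Nat.two_pow_pos m
        omega
      have hrec := dirichlet_rec hj.le x
      rw [hn, hrec]
      have habs : |dirichlet (2 ^ m) x + rad m x * dirichlet j x|
          ≤ |dirichlet (2 ^ m) x| + |dirichlet j x| := by
        calc _ ≤ |dirichlet (2 ^ m) x| + |rad m x * dirichlet j x| := abs_add_le _ _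
          _ = _ := by rw [abs_mul, rad_abs, one_mul]
      have hIH := ih j hjn
      -- relate bit sums
      by_cases hms : m ≤ s
      · -- case m ≤ s
        have hsum : (∑ i ∈ Finset.range (s + 1), if (2 ^ m + j).testBit i then (2:ℝ) ^ i else 0)
            = 2 ^ m + ∑ i ∈ Finset.range (s + 1), if j.testBit i then (2:ℝ) ^ i else 0 := by
          have hpt : ∀ i, (if (2 ^ m + j).testBit i then (2:ℝ) ^ i else 0)
              = (if i = m then (2:ℝ) ^ m else 0) + (if j.testBit i then (2:ℝ) ^ i else 0) := by
            intro i
            rcases eq_or_ne i m with rfl | him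
            · rw [Nat.testBit_two_pow_add_eq, Nat.testBit_eq_false_of_lt hj]
              simp
            · have hbit : (2 ^ m + j).testBit i = j.testBit i := by
                rcases lt_or_gt_of_ne him with h' | h'
                · exact Nat.testBit_two_pow_add_gt h' j
                · have ha : 2 ^ m + j < 2 ^ i := by
                    have : 2 ^ (m + 1) ≤ 2 ^ i := Nat.pow_le_pow_right (by norm_num) h'
                    have h3 : 2 ^ (m+1) = 2 ^ m + 2 ^ m := by ring
                    omega
                  rw [Nat.testBit_eq_false_of_lt ha,
                    Nat.testBit_eq_false_of_lt (by omega : j < 2 ^ i)]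
              rw [hbit, if_neg him, zero_add]
          rw [Finset.sum_congr rfl (fun i _ => hpt i), Finset.sum_add_distrib,
            Finset.sum_ite_eq' (Finset.range (s + 1)) m fun i => (2:ℝ) ^ m,
            if_pos (Finset.mem_range.mpr (by omega))]
        rw [hsum]
        have := abs_dirichlet_two_pow_le m x
        linarith
      · -- case s < m
        push_neg at hms
        have hz : dirichlet (2 ^ m) x = 0 := dirichlet_two_pow_eq_zero hms hx
        have hsum : (∑ i ∈ Finset.range (s + 1), if (2 ^ m + j).testBit i then (2:ℝ) ^ i else 0)
            = ∑ i ∈ Finset.range (s + 1), if j.testBit i then (2:ℝ) ^ i else 0 := by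
          refine Finset.sum_congr rfl ?_
          intro i hi
          have hilt : i < m := by
            have := Finset.mem_range.mp hi; omega
          rw [Nat.testBit_two_pow_add_gt hilt]
        rw [hsum, hz]
        calc |0 + rad m x * dirichlet j x| = |dirichlet j x| := by
              rw [zero_add, abs_mul, rad_abs, one_mul]
          _ ≤ _ := hIH

lemma abs_dirichlet_le {s : ℕ} {x : G2} (hx : x s ≠ 0) (n : ℕ) :
    |dirichlet n x| ≤ 2 ^ (s + 1) := by
  refine le_trans (abs_dirichlet_le_sum hx n) ?_
  calc (∑ i ∈ Finset.range (s + 1), if n.testBit i then (2:ℝ) ^ i else 0)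
      ≤ ∑ i ∈ Finset.range (s + 1), (2:ℝ) ^ i := by
        refine Finset.sum_le_sum (fun i _ => ?_)
        split
        exacts [le_rfl, by positivity]
    _ ≤ 2 ^ (s + 1) := by
        rw [geom_sum_eq (by norm_num)]
        rw [show ((2:ℝ) - 1) = 1 by norm_num, div_one]
        linarith [pow_pos (show (0:ℝ) < 2 by norm_num) (s+1)]

instance : Measure.IsAddHaarMeasure muG := Measure.isAddHaarMeasure_addHaarMeasure _

lemma muG_univ : muG Set.univ = 1 := Measure.addHaarMeasure_self

instance : IsProbabilityMeasure muG := ⟨muG_univ⟩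

lemma measurableSet_cyl (n : ℕ) : MeasurableSet (cyl n) := by
  have h : cyl n = ⋂ i ∈ Finset.range n, (fun x : G2 => x i) ⁻¹' {0} := by
    ext y; simp [cyl]
  rw [h]
  exact Finset.measurableSet_biInter _
    (fun i _ => measurable_pi_apply i (MeasurableSpace.measurableSet_top))

lemma zmod2_add_self : ∀ a : ZMod 2, a + a = 0 := by decide

lemma zmod2_add_eq_zero : ∀ a b : ZMod 2, (a + b = 0 ↔ b = a) := by decide

set_option maxHeartbeats 1000000 in
lemma muG_cyl (N : ℕ) : muG (cyl N) = (2 ^ N : ℝ≥0∞)⁻¹ := by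
  classical
  set e : (Fin N → ZMod 2) → G2 := fun v i => if h : i < N then v ⟨i, h⟩ else 0 with he
  set A : (Fin N → ZMod 2) → Set G2 := fun v => (fun y => e v + y) ⁻¹' cyl N with hA
  have hmem : ∀ v y, y ∈ A v ↔ ∀ i, ∀ h : i < N, y i = v ⟨i, h⟩ := by
    intro v y
    simp only [hA, Set.mem_preimage, cyl, Set.mem_setOf_eq, Pi.add_apply]
    constructor
    · intro hy i h
      have h1 := hy i h
      simp only [he, dif_pos h] at h1
      exact (zmod2_add_eq_zero _ _).mp h1
    · intro hy i h
      have h1 := hy i h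
      simp only [he, dif_pos h]
      rw [h1]
      exact zmod2_add_self _
  have hmeasA : ∀ v, MeasurableSet (A v) := by
    intro v
    exact (continuous_const.add continuous_id).measurable (measurableSet_cyl N)
  have hdisj : Pairwise (Function.onFun Disjoint A) := by
    intro v w hvw
    rw [Function.onFun, Set.disjoint_left]
    intro y hyv hyw
    apply hvw
    funext i
    exact ((hmem v y).mp hyv i.1 i.2).symm.trans ((hmem w y).mp hyw i.1 i.2)
  have hunion : ⋃ v, A v = Set.univ := by
    ext y
    simp only [Set.mem_iUnion, Set.mem_univ, iff_true]
    exact ⟨fun i => y i.val, (hmem (fun i => y i.val) y).mpr fun i h => rfl⟩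
  have hmu : ∀ v, muG (A v) = muG (cyl N) := fun v =>
    measure_preimage_add muG (e v) (cyl N)
  have h1 : muG (⋃ v, A v) = ∑' v, muG (A v) := measure_iUnion hdisj hmeasA
  rw [hunion, muG_univ, tsum_fintype] at h1
  simp only [hmu, Finset.sum_const, Finset.card_univ] at h1
  have hcard : Fintype.card (Fin N → ZMod 2) = 2 ^ N := by
    simp [Fintype.card_fun]
  rw [hcard] at h1
  have h2 : (2 ^ N : ℝ≥0∞) * muG (cyl N) = 1 := by
    have h3 := h1.symm
    rw [nsmul_eq_mul] at h3
    exact_mod_cast h3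
  have hne : (2 ^ N : ℝ≥0∞) ≠ 0 := by
    exact pow_ne_zero _ (by norm_num)
  have hnt : (2 ^ N : ℝ≥0∞) ≠ ⊤ := by
    exact ENNReal.pow_ne_top (by norm_num)
  calc muG (cyl N) = (2 ^ N : ℝ≥0∞)⁻¹ * ((2 ^ N : ℝ≥0∞) * muG (cyl N)) := by
        rw [← mul_assoc, ENNReal.inv_mul_cancel hne hnt, one_mul]
    _ = (2 ^ N : ℝ≥0∞)⁻¹ := by rw [h2, mul_one]

lemma continuous_dirichlet (n : ℕ) : Continuous (dirichlet n) := by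
  unfold dirichlet
  refine continuous_finset_sum _ fun k _ => ?_
  unfold walsh
  refine continuous_finset_prod _ fun i _ => ?_
  split
  · exact (continuous_of_discreteTopology :
        Continuous fun a : ZMod 2 => ((-1 : ℝ)) ^ a.val).comp (continuous_apply i)
  · exact continuous_const

theorem stmt2 :
    ∃ c : ℝ, 0 < c ∧ ∀ (n N s : ℕ) (x : G2), s < N → x ∈ cyl s \ cyl (s + 1) →
      ∫ t in cyl N, |dirichlet n (x - t)| ∂muG ≤ c * 2 ^ s / 2 ^ N := by
  refine ⟨2, by norm_num, ?_⟩
  intro n N s x hsN hx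
  have hxs : x s ≠ 0 := by
    intro h
    refine hx.2 (fun i hi => ?_)
    rcases Nat.lt_succ_iff_lt_or_eq.mp hi with h' | h'
    · exact hx.1 i h'
    · subst h'; exact h
  have hbound : ∀ t ∈ cyl N, |dirichlet n (x - t)| ≤ (2 : ℝ) ^ (s + 1) := by
    intro t ht
    have hts : t s = 0 := ht s hsN
    have hne : (x - t) s ≠ 0 := by
      simp only [Pi.sub_apply, hts, sub_zero]
      exact hxs
    exact abs_dirichlet_le hne n
  have hcont : Continuous fun t : G2 => |dirichlet n (x - t)| :=
    ((continuous_dirichlet n).comp (continuous_const.sub continuous_id)).abs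
  have hint : IntegrableOn (fun t : G2 => |dirichlet n (x - t)|) (cyl N) muG := by
    refine (hcont.integrable_of_hasCompactSupport ?_).integrableOn
    exact IsCompact.of_isClosed_subset isCompact_univ (isClosed_tsupport _) (Set.subset_univ _)
  have hle : ∫ t in cyl N, |dirichlet n (x - t)| ∂muG
      ≤ ∫ _t in cyl N, (2 : ℝ) ^ (s + 1) ∂muG :=
    setIntegral_mono_on hint (integrableOn_const (measure_ne_top _ _))
      (measurableSet_cyl N) hbound
  rw [setIntegral_const, measureReal_def, muG_cyl] at hle
  have htoReal : ((2 ^ N : ℝ≥0∞)⁻¹).toReal = ((2 : ℝ) ^ N)⁻¹ := by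
    rw [ENNReal.toReal_inv]; norm_num
  rw [htoReal] at hle
  calc ∫ t in cyl N, |dirichlet n (x - t)| ∂muG
      ≤ ((2 : ℝ) ^ N)⁻¹ • (2 : ℝ) ^ (s + 1) := hle
    _ = 2 * 2 ^ s / 2 ^ N := by
        rw [smul_eq_mul, pow_succ]; ring


end
end

section
/- Let 0 < p < 1. There is a constant c_p such that for every p-atom a on G = (Z/2)^ℕ (supported on I_N, ‖a‖_∞ ≤ 2^{N/p}, mean zero), ∫_{G \ I_N} sup_{n∈ℕ} ( |S_n a(x)| / (n+1)^{1/p − 1} )^p dμ(x) ≤ c_p. -/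
open MeasureTheory ENNReal Filter
open scoped Classical

noncomputable section

namespace Dev


lemma zmod2_cases (a : ZMod 2) : a = 0 ∨ a = 1 := by
  have h : ∀ b : ZMod 2, b = 0 ∨ b = 1 := by decide
  exact h a

lemma rad_abs (k : ℕ) (x : G2) : |rad k x| = 1 := by
  unfold rad; rw [abs_pow, abs_neg, abs_one, one_pow]

lemma rad_eq_one {k : ℕ} {x : G2} (h : x k = 0) : rad k x = 1 := by
  unfold rad; rw [h]; norm_num [ZMod.val_zero]

lemma rad_eq_neg_one {k : ℕ} {x : G2} (h : x k ≠ 0) : rad k x = -1 := by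
  rcases zmod2_cases (x k) with h0 | h1
  · exact absurd h0 h
  · unfold rad; rw [h1]; norm_num [show (1 : ZMod 2).val = 1 from rfl]

lemma rad_add (k : ℕ) (x y : G2) : rad k (x + y) = rad k x * rad k y := by
  have hx := zmod2_cases (x k); have hy := zmod2_cases (y k)
  unfold rad
  rcases hx with hx | hx <;> rcases hy with hy | hy <;>
    simp [Pi.add_apply, hx, hy, show ((0:ZMod 2)+0) = 0 from rfl,
      show ((0:ZMod 2)+1) = 1 from rfl, show ((1:ZMod 2)+0) = 1 from rfl,
      show ((1:ZMod 2)+1) = 0 from rfl, show (0:ZMod 2).val = 0 from rfl,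
      show (1:ZMod 2).val = 1 from rfl]

lemma walsh_eq_prod_range (n : ℕ) (x : G2) {B : ℕ} (hB : n ≤ B) :
    walsh n x = ∏ k ∈ Finset.range B, (if n.testBit k then rad k x else 1) := by
  unfold walsh
  apply Finset.prod_subset (Finset.range_subset_range.2 hB)
  intro k hk hk'
  simp only [Finset.mem_range] at hk hk'
  have : n < 2 ^ k := lt_of_le_of_lt (Nat.not_lt.mp hk') (Nat.lt_two_pow_self)
  rw [Nat.testBit_lt_two_pow this]; simp

lemma walsh_abs_le (n : ℕ) (x : G2) : |walsh n x| ≤ 1 := by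
  unfold walsh
  rw [Finset.abs_prod]
  apply Finset.prod_le_one
  · intro i _; positivity
  · intro i _; split
    · rw [rad_abs]
    · simp
lemma walsh_add (n : ℕ) (x y : G2) : walsh n (x + y) = walsh n x * walsh n y := by
  unfold walsh
  rw [← Finset.prod_mul_distrib]
  apply Finset.prod_congr rfl
  intro k _
  split
  · exact rad_add k x y
  · ring

lemma walsh_one_on_cyl {k N : ℕ} (hk : k < 2 ^ N) {t : G2} (ht : t ∈ cyl N) :
    walsh k t = 1 := by
  unfold walsh
  apply Finset.prod_eq_one
  intro i _
  split
  · next h =>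
    have h2 : 2 ^ i ≤ k := Nat.ge_two_pow_of_testBit h
    have hiN : i < N := by
      by_contra hc
      have hle : (2:ℕ) ^ N ≤ 2 ^ i := Nat.pow_le_pow_right (by norm_num) (Nat.not_lt.mp hc)
      omega
    exact rad_eq_one (ht i hiN)
  · rfl

lemma walsh_two_pow (m : ℕ) (x : G2) : walsh (2 ^ m) x = rad m x := by
  unfold walsh
  rw [Finset.prod_eq_single m]
  · simp [Nat.testBit_two_pow_self]
  · intro i _ hi
    rw [Nat.testBit_two_pow_of_ne (Ne.symm hi)]; simp
  · intro h
    exact absurd (Finset.mem_range.2 (Nat.lt_two_pow_self)) h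

lemma walsh_block (m q r : ℕ) (hr : r < 2 ^ m) (x : G2) :
    walsh (2 ^ m * q + r) x = walsh (2 ^ m * q) x * walsh r x := by
  set B := 2 ^ m * q + r with hB
  rw [walsh_eq_prod_range (2 ^ m * q + r) x (le_refl B),
      walsh_eq_prod_range (2 ^ m * q) x (Nat.le_add_right _ _),
      walsh_eq_prod_range r x (Nat.le_add_left _ _), ← Finset.prod_mul_distrib]
  apply Finset.prod_congr rfl
  intro k _
  rw [Nat.testBit_two_pow_mul_add q hr k]
  by_cases hkm : k < m
  · have : Nat.testBit (2 ^ m * q) k = false := by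
      rw [Nat.testBit_two_pow_mul]
      simp [Nat.not_le.2 hkm]
    simp [hkm, this]
  · have : Nat.testBit r k = false :=
      Nat.testBit_lt_two_pow (lt_of_lt_of_le hr (Nat.pow_le_pow_right (by norm_num) (Nat.not_lt.mp hkm)))
    have h2 : Nat.testBit (2 ^ m * q) k = Nat.testBit q (k - m) := by
      rw [Nat.testBit_two_pow_mul]; simp [Nat.not_lt.mp hkm]
    simp [hkm, this, h2]

lemma sum_walsh_two_pow (m : ℕ) (x : G2) :
    ∑ k ∈ Finset.range (2 ^ m), walsh k x = ∏ i ∈ Finset.range m, (1 + rad i x) := by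
  induction m with
  | zero => simp [walsh]
  | succ m ih =>
    have h2 : 2 ^ (m + 1) = 2 ^ m + 2 ^ m := by ring
    rw [h2, Finset.sum_range_add, ih, Finset.prod_range_succ]
    have : ∀ r ∈ Finset.range (2 ^ m), walsh (2 ^ m + r) x = rad m x * walsh r x := by
      intro r hr
      have := walsh_block m 1 r (Finset.mem_range.1 hr) x
      rw [mul_one] at this
      rw [this, walsh_two_pow]
    rw [Finset.sum_congr rfl this, ← Finset.mul_sum, ih]
    ring

lemma sum_walsh_mul (m q : ℕ) (x : G2) :
    ∑ k ∈ Finset.range (2 ^ m * q), walsh k x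
      = (∑ j ∈ Finset.range q, walsh (2 ^ m * j) x) * ∑ r ∈ Finset.range (2 ^ m), walsh r x := by
  induction q with
  | zero => simp
  | succ q ih =>
    have h2 : 2 ^ m * (q + 1) = 2 ^ m * q + 2 ^ m := by ring
    rw [h2, Finset.sum_range_add, ih, Finset.sum_range_succ, add_mul]
    congr 1
    rw [Finset.mul_sum]
    apply Finset.sum_congr rfl
    intro r hr
    exact walsh_block m q r (Finset.mem_range.1 hr) x

lemma dirichlet_abs_le {s : ℕ} {y : G2} (hys : y s ≠ 0) (n : ℕ) :
    |dirichlet n y| ≤ 2 ^ (s + 1) := by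
  unfold dirichlet
  set M := 2 ^ (s + 1) with hM
  have hMpos : 0 < M := Nat.pow_pos (by norm_num)
  have hsplit : n = M * (n / M) + n % M := (Nat.div_add_mod n M).symm
  have hzero : ∑ r ∈ Finset.range M, walsh r y = 0 := by
    rw [hM, sum_walsh_two_pow]
    apply Finset.prod_eq_zero (Finset.self_mem_range_succ s)
    rw [rad_eq_neg_one hys]; ring
  calc |∑ k ∈ Finset.range n, walsh k y|
      = |∑ k ∈ Finset.range (M * (n / M)), walsh k y
          + ∑ k ∈ Finset.range (n % M), walsh (M * (n / M) + k) y| := by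
        rw [← Finset.sum_range_add, ← hsplit]
    _ = |∑ k ∈ Finset.range (n % M), walsh (M * (n / M) + k) y| := by
        rw [sum_walsh_mul, hzero, mul_zero, zero_add]
    _ ≤ ∑ k ∈ Finset.range (n % M), |walsh (M * (n / M) + k) y| :=
        Finset.abs_sum_le_sum_abs _ _
    _ ≤ ∑ _k ∈ Finset.range (n % M), (1 : ℝ) :=
        Finset.sum_le_sum fun k _ => walsh_abs_le _ _
    _ = ((n % M : ℕ) : ℝ) := by simp
    _ ≤ ((M : ℕ) : ℝ) := Nat.cast_le.2 (Nat.mod_lt n hMpos).le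
    _ = 2 ^ (s + 1) := by rw [hM]; push_cast; ring
instance : muG.IsAddLeftInvariant := Measure.isAddLeftInvariant_addHaarMeasure _
instance : IsProbabilityMeasure muG := ⟨Measure.addHaarMeasure_self⟩

lemma measurable_coord (i : ℕ) : Measurable fun x : G2 => x i := measurable_pi_apply i

lemma measurableSet_coord_eq (i : ℕ) (c : ZMod 2) : MeasurableSet {x : G2 | x i = c} := by
  have : {x : G2 | x i = c} = (fun x : G2 => x i) ⁻¹' {c} := by ext x; simp
  rw [this]
  exact measurable_coord i MeasurableSpace.measurableSet_top

lemma measurable_cyl (n : ℕ) : MeasurableSet (cyl n) := by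
  have : cyl n = ⋂ i : Fin n, {x : G2 | x i.1 = 0} := by
    ext x; simp [cyl]; constructor
    · intro h i; exact h i.1 i.2
    · intro h i hi; exact h ⟨i, hi⟩
  rw [this]
  exact MeasurableSet.iInter fun i => measurableSet_coord_eq i.1 0

lemma measurable_rad (k : ℕ) : Measurable (rad k) := by
  have : rad k = (fun c : ZMod 2 => ((-1 : ℝ)) ^ c.val) ∘ fun x : G2 => x k := rfl
  rw [this]
  exact Measurable.of_discrete.comp (measurable_coord k)

lemma measurable_walsh (n : ℕ) : Measurable (walsh n) := by
  unfold walsh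
  apply Finset.measurable_prod
  intro k _
  split
  · exact measurable_rad k
  · exact measurable_const

lemma measurable_dirichlet (n : ℕ) : Measurable (dirichlet n) := by
  unfold dirichlet
  exact Finset.measurable_sum _ fun k _ => measurable_walsh k

lemma zmod2_eq_of_add_eq_zero {a b : ZMod 2} (h : a + b = 0) : b = a := by
  rcases zmod2_cases a with ha | ha <;> rcases zmod2_cases b with hb | hb <;>
    subst ha <;> subst hb <;> first | rfl | (exact absurd h (by decide))

lemma muG_cyl (n : ℕ) : muG (cyl n) = (2 ^ n)⁻¹ := by
  classical
  have key : ∀ v : Fin n → ZMod 2,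
      muG {x : G2 | ∀ i : Fin n, x i = v i} = muG (cyl n) := by
    intro v
    set e : G2 := fun i => if h : i < n then v ⟨i, h⟩ else 0 with he
    have hset : {x : G2 | ∀ i : Fin n, x i = v i} = (fun x => e + x) ⁻¹' cyl n := by
      ext x
      simp only [Set.mem_setOf_eq, Set.mem_preimage, cyl, Pi.add_apply]
      constructor
      · intro h i hi
        show e i + x i = 0
        rw [he]; simp only [hi, dif_pos]
        rw [h ⟨i, hi⟩]
        exact CharTwo.add_self_eq_zero _
      · intro h i
        have h2 : e i.1 + x i.1 = 0 := h i.1 i.2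
        rw [he] at h2; simp only [i.2, dif_pos] at h2
        exact zmod2_eq_of_add_eq_zero h2
    rw [hset, measure_preimage_add]
  have disj : Pairwise (Function.onFun Disjoint
      fun v : Fin n → ZMod 2 => {x : G2 | ∀ i : Fin n, x i = v i}) := by
    intro v w hvw
    simp only [Function.onFun, Set.disjoint_left]
    intro x hx hx'
    apply hvw
    funext i
    rw [← hx i, ← hx' i]
  have meas : ∀ v : Fin n → ZMod 2, MeasurableSet {x : G2 | ∀ i : Fin n, x i = v i} := by
    intro v
    have : {x : G2 | ∀ i : Fin n, x i = v i} = ⋂ i : Fin n, {x : G2 | x i.1 = v i} := by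
      ext x; simp
    rw [this]
    exact MeasurableSet.iInter fun i => measurableSet_coord_eq i.1 (v i)
  have cover : ⋃ v : Fin n → ZMod 2, {x : G2 | ∀ i : Fin n, x i = v i} = Set.univ := by
    ext x
    simp only [Set.mem_iUnion, Set.mem_univ, iff_true]
    exact ⟨fun i => x i, fun i => rfl⟩
  have htot : ∑ v : Fin n → ZMod 2, muG {x : G2 | ∀ i : Fin n, x i = v i} = 1 := by
    have h := measure_iUnion (μ := muG) disj meas
    rw [cover, measure_univ] at h
    rw [← tsum_fintype (L := SummationFilter.unconditional _)]
    exact h.symm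
  rw [Finset.sum_congr rfl (fun v _ => key v), Finset.sum_const, Finset.card_univ] at htot
  have hcard : Fintype.card (Fin n → ZMod 2) = 2 ^ n := by
    simp [Fintype.card_fun]
  rw [hcard, nsmul_eq_mul] at htot
  push_cast at htot
  have h2 : ((2 : ℝ≥0∞) ^ n) ≠ 0 := by positivity
  have h2' : ((2 : ℝ≥0∞) ^ n) ≠ ⊤ := ENNReal.pow_ne_top (by norm_num)
  calc muG (cyl n) = (2 ^ n)⁻¹ * (2 ^ n * muG (cyl n)) := by
        rw [← mul_assoc, ENNReal.inv_mul_cancel h2 h2', one_mul]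
    _ = (2 ^ n)⁻¹ := by rw [htot, mul_one]
lemma integrable_of_bdd {f : G2 → ℝ} (hf : Measurable f) {C : ℝ} (hC : ∀ x, |f x| ≤ C) :
    Integrable f muG := by
  refine (integrable_const C).mono' hf.aestronglyMeasurable ?_
  exact Filter.Eventually.of_forall (by simpa [Real.norm_eq_abs] using hC)

lemma measurable_translate (x : G2) : Measurable fun t : G2 => x + t := measurable_const_add x

lemma funS_eq_conv {a : G2 → ℝ} (ha : Measurable a) {C : ℝ} (hC : ∀ t, |a t| ≤ C)
    (n : ℕ) (x : G2) :
    funS a n x = ∫ t, a t * dirichlet n (x + t) ∂muG := by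
  unfold funS fhat
  have hint : ∀ k, Integrable (fun t => a t * walsh k t * walsh k x) muG := by
    intro k
    apply integrable_of_bdd ((ha.mul (measurable_walsh k)).mul_const _) (C := |C|)
    intro t
    calc |a t * walsh k t * walsh k x| = |a t| * |walsh k t| * |walsh k x| := by
          rw [abs_mul, abs_mul]
      _ ≤ |C| * 1 * 1 := by
          apply mul_le_mul (mul_le_mul (le_trans (hC t) (le_abs_self C)) (walsh_abs_le _ _)
            (abs_nonneg _) (abs_nonneg _)) (walsh_abs_le _ _) (abs_nonneg _) (by positivity)
      _ = |C| := by ring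
  calc ∑ k ∈ Finset.range n, (∫ t, a t * walsh k t ∂muG) * walsh k x
      = ∑ k ∈ Finset.range n, ∫ t, a t * walsh k t * walsh k x ∂muG := by
        apply Finset.sum_congr rfl
        intro k _
        rw [← integral_mul_const]
    _ = ∫ t, ∑ k ∈ Finset.range n, a t * walsh k t * walsh k x ∂muG :=
        (integral_finset_sum _ fun k _ => hint k).symm
    _ = ∫ t, a t * dirichlet n (x + t) ∂muG := by
        apply integral_congr_ae
        apply Filter.Eventually.of_forall
        intro t
        show ∑ k ∈ Finset.range n, a t * walsh k t * walsh k x = a t * dirichlet n (x + t)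
        unfold dirichlet
        rw [Finset.mul_sum]
        apply Finset.sum_congr rfl
        intro k _
        rw [walsh_add, mul_comm (walsh k x), ← mul_assoc]

lemma fhat_eq_zero {a : G2 → ℝ} {N : ℕ} (hsupp : ∀ x : G2, x ∉ cyl N → a x = 0)
    (hmean : (∫ x, a x ∂muG) = 0) {k : ℕ} (hk : k < 2 ^ N) : fhat a k = 0 := by
  unfold fhat
  have h : ∀ t, a t * walsh k t = a t := by
    intro t
    by_cases ht : t ∈ cyl N
    · rw [walsh_one_on_cyl hk ht, mul_one]
    · rw [hsupp t ht, zero_mul]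
  rw [integral_congr_ae (Filter.Eventually.of_forall h)]
  exact hmean

lemma funS_eq_zero {a : G2 → ℝ} {N : ℕ} (hsupp : ∀ x : G2, x ∉ cyl N → a x = 0)
    (hmean : (∫ x, a x ∂muG) = 0) {n : ℕ} (hn : n ≤ 2 ^ N) (x : G2) : funS a n x = 0 := by
  unfold funS
  apply Finset.sum_eq_zero
  intro k hkr
  rw [fhat_eq_zero hsupp hmean (lt_of_lt_of_le (Finset.mem_range.1 hkr) hn), zero_mul]

lemma funS_abs_le {a : G2 → ℝ} (ha : Measurable a) {C : ℝ} (hC : ∀ t, |a t| ≤ C)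
    {N s : ℕ} (hsN : s < N) (hsupp : ∀ x : G2, x ∉ cyl N → a x = 0)
    {x : G2} (hxs : x s ≠ 0) (n : ℕ) :
    |funS a n x| ≤ C * 2 ^ (s + 1) * ((2 : ℝ) ^ N)⁻¹ := by
  have hC0 : 0 ≤ C := le_trans (abs_nonneg _) (hC (fun _ => 0))
  rw [funS_eq_conv ha hC n x]
  have hmeasD : Measurable fun t : G2 => a t * dirichlet n (x + t) :=
    ha.mul ((measurable_dirichlet n).comp (measurable_translate x))
  have hbd : ∀ t, |a t * dirichlet n (x + t)|
      ≤ (cyl N).indicator (fun _ => C * 2 ^ (s + 1)) t := by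
    intro t
    by_cases ht : t ∈ cyl N
    · rw [Set.indicator_of_mem ht, abs_mul]
      apply mul_le_mul (hC t) _ (abs_nonneg _) hC0
      apply dirichlet_abs_le (y := x + t) (s := s)
      · show x s + t s ≠ 0
        rw [ht s hsN, add_zero]
        exact hxs
    · rw [Set.indicator_of_notMem ht, hsupp t ht, zero_mul, abs_zero]
  calc |∫ t, a t * dirichlet n (x + t) ∂muG|
      ≤ ∫ t, |a t * dirichlet n (x + t)| ∂muG := by
        simpa only [Real.norm_eq_abs] using
          norm_integral_le_integral_norm (μ := muG) (fun t => a t * dirichlet n (x + t))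
    _ ≤ ∫ t, (cyl N).indicator (fun _ => C * 2 ^ (s + 1)) t ∂muG := by
        apply integral_mono _ _ hbd
        · apply (integrable_of_bdd hmeasD (C := C * 2 ^ (s + 1)) ?_).abs
          intro t
          refine le_trans (hbd t) ?_
          by_cases ht : t ∈ cyl N
          · rw [Set.indicator_of_mem ht]
          · rw [Set.indicator_of_notMem ht]; positivity
        · exact (integrable_const _).indicator (measurable_cyl N)
    _ = C * 2 ^ (s + 1) * (muG (cyl N)).toReal := by
        rw [integral_indicator_const _ (measurable_cyl N), smul_eq_mul, mul_comm, measureReal_def]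
    _ = C * 2 ^ (s + 1) * ((2 : ℝ) ^ N)⁻¹ := by
        rw [muG_cyl]
        congr 1
        simp [ENNReal.toReal_inv]
lemma sup_bound {p : ℝ} (hp : 0 < p) (hp1 : p < 1) {N s : ℕ} (hsN : s < N)
    {a : G2 → ℝ} (ha : Measurable a) (hsupp : ∀ x : G2, x ∉ cyl N → a x = 0)
    (hbd : ∀ x : G2, |a x| ≤ (2 : ℝ) ^ ((N : ℝ) / p)) (hmean : (∫ x, a x ∂muG) = 0)
    {x : G2} (hxs : x s ≠ 0) :
    (⨆ n : ℕ, (‖funS a n x‖₊ : ℝ≥0∞) / ENNReal.ofReal (((n : ℝ) + 1) ^ (1 / p - 1)))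
      ≤ ENNReal.ofReal (2 ^ (s + 1)) := by
  have hexp : (0 : ℝ) ≤ 1 / p - 1 := by
    have : (1 : ℝ) ≤ 1 / p := by
      rw [le_div_iff₀ hp]; linarith
    linarith
  apply iSup_le
  intro n
  by_cases hn : n ≤ 2 ^ N
  · rw [funS_eq_zero hsupp hmean hn x]
    simp
  · apply ENNReal.div_le_of_le_mul
    rw [← enorm_eq_nnnorm, ← ofReal_norm, ← ENNReal.ofReal_mul (by positivity)]
    apply ENNReal.ofReal_le_ofReal
    rw [Real.norm_eq_abs]
    refine le_trans (funS_abs_le ha hbd hsN hsupp hxs n) ?_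
    have h1 : (2 : ℝ) ^ ((N : ℝ) / p) * ((2 : ℝ) ^ N)⁻¹ = ((2 : ℝ) ^ N) ^ (1 / p - 1) := by
      rw [← Real.rpow_natCast (2 : ℝ) N, ← Real.rpow_neg (by norm_num),
        ← Real.rpow_add (by norm_num), ← Real.rpow_mul (by norm_num)]
      congr 1
      ring
    calc (2 : ℝ) ^ ((N : ℝ) / p) * 2 ^ (s + 1) * ((2 : ℝ) ^ N)⁻¹
        = 2 ^ (s + 1) * (((2 : ℝ) ^ N) ^ (1 / p - 1)) := by rw [← h1]; ring
      _ ≤ 2 ^ (s + 1) * (((n : ℝ) + 1) ^ (1 / p - 1)) := by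
          apply mul_le_mul_of_nonneg_left _ (by positivity)
          apply Real.rpow_le_rpow (by positivity) _ hexp
          have h3 : ((2 : ℝ)) ^ N ≤ (n : ℝ) := by
            exact_mod_cast le_of_lt (Nat.not_le.mp hn)
          linarith

theorem stmt9' (p : ℝ) (hp : 0 < p) (hp1 : p < 1) :
    ∃ c : ℝ, 0 < c ∧ ∀ (N : ℕ) (a : G2 → ℝ), Measurable a →
      (∀ x : G2, x ∉ cyl N → a x = 0) →
      (∀ x : G2, |a x| ≤ (2 : ℝ) ^ ((N : ℝ) / p)) →
      (∫ x, a x ∂muG) = 0 →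
      ∫⁻ x in (cyl N)ᶜ,
          (⨆ n : ℕ, (‖funS a n x‖₊ : ℝ≥0∞) / ENNReal.ofReal (((n : ℝ) + 1) ^ (1 / p - 1))) ^ p
          ∂muG ≤ ENNReal.ofReal c := by
  classical
  set r : ℝ := (2 : ℝ) ^ (p - 1) with hr
  have hr1 : r < 1 := Real.rpow_lt_one_of_one_lt_of_neg one_lt_two (by linarith)
  have hr0 : 0 < r := Real.rpow_pos_of_pos two_pos _
  have h2p : (0 : ℝ) < (2 : ℝ) ^ p := Real.rpow_pos_of_pos two_pos _
  refine ⟨(2 : ℝ) ^ p * (1 - r)⁻¹, mul_pos h2p (inv_pos.2 (by linarith)), ?_⟩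
  intro N a ha hsupp hbd hmean
  set F : G2 → ℝ≥0∞ := fun x =>
    (⨆ n : ℕ, (‖funS a n x‖₊ : ℝ≥0∞) / ENNReal.ofReal (((n : ℝ) + 1) ^ (1 / p - 1))) ^ p
    with hF
  set E : ℕ → Set G2 := fun s => cyl s ∩ {x : G2 | x s = 0}ᶜ with hE
  have hEmeas : ∀ s, MeasurableSet (E s) := fun s =>
    (measurable_cyl s).inter (measurableSet_coord_eq s 0).compl
  have hcover : (cyl N)ᶜ ⊆ ⋃ s, E s ∩ (cyl N)ᶜ := by
    intro x hx
    have hex : ∃ i, x i ≠ 0 := by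
      by_contra hc
      push_neg at hc
      exact hx (fun i _ => hc i)
    set s := Nat.find hex with hs
    refine Set.mem_iUnion.2 ⟨s, ⟨⟨?_, ?_⟩, hx⟩⟩
    · intro i his
      rw [hs] at his
      simpa using Nat.find_min hex his
    · exact Nat.find_spec hex
  have term_bound : ∀ s : ℕ, ∫⁻ x in E s ∩ (cyl N)ᶜ, F x ∂muG
      ≤ ENNReal.ofReal ((2 : ℝ) ^ p) * (ENNReal.ofReal r) ^ s := by
    intro s
    by_cases hsN : s < N
    · have hpt : ∀ x ∈ E s ∩ (cyl N)ᶜ, F x ≤ ENNReal.ofReal (((2 : ℝ) ^ (s + 1)) ^ p) := by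
        intro x hx
        rw [hF, ← ENNReal.ofReal_rpow_of_pos (by positivity)]
        exact ENNReal.rpow_le_rpow (sup_bound hp hp1 hsN ha hsupp hbd hmean hx.1.2) hp.le
      calc ∫⁻ x in E s ∩ (cyl N)ᶜ, F x ∂muG
          ≤ ∫⁻ _x in E s ∩ (cyl N)ᶜ, ENNReal.ofReal (((2 : ℝ) ^ (s + 1)) ^ p) ∂muG :=
            setLIntegral_mono' ((hEmeas s).inter (measurable_cyl N).compl) hpt
        _ = ENNReal.ofReal (((2 : ℝ) ^ (s + 1)) ^ p) * muG (E s ∩ (cyl N)ᶜ) :=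
            setLIntegral_const _ _
        _ ≤ ENNReal.ofReal (((2 : ℝ) ^ (s + 1)) ^ p) * muG (cyl s) := by
            apply mul_le_mul_right
            apply measure_mono
            exact fun x hx => hx.1.1
        _ = ENNReal.ofReal (((2 : ℝ) ^ (s + 1)) ^ p) * ENNReal.ofReal (((2 : ℝ) ^ s)⁻¹) := by
            rw [muG_cyl, ENNReal.ofReal_inv_of_pos (by positivity)]
            congr 2
            rw [ENNReal.ofReal_pow (by norm_num)]
            norm_num
        _ = ENNReal.ofReal (((2 : ℝ) ^ (s + 1)) ^ p * ((2 : ℝ) ^ s)⁻¹) := by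
            rw [ENNReal.ofReal_mul (by positivity)]
        _ = ENNReal.ofReal ((2 : ℝ) ^ p * r ^ s) := by
            congr 1
            rw [hr, ← Real.rpow_natCast (2 : ℝ) (s + 1), ← Real.rpow_natCast (2 : ℝ) s,
              ← Real.rpow_natCast ((2 : ℝ) ^ (p - 1)) s,
              ← Real.rpow_neg (by norm_num : (0:ℝ) ≤ 2),
              ← Real.rpow_mul (by norm_num : (0:ℝ) ≤ 2),
              ← Real.rpow_mul (by norm_num : (0:ℝ) ≤ 2),
              ← Real.rpow_add (by norm_num : (0:ℝ) < 2),
              ← Real.rpow_add (by norm_num : (0:ℝ) < 2)]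
            congr 1
            push_cast
            ring
        _ = ENNReal.ofReal ((2 : ℝ) ^ p) * (ENNReal.ofReal r) ^ s := by
            rw [ENNReal.ofReal_mul h2p.le, ENNReal.ofReal_pow hr0.le]
    · have hempty : E s ∩ (cyl N)ᶜ = ∅ := by
        ext x
        simp only [Set.mem_inter_iff, Set.mem_empty_iff_false, iff_false, not_and, hE,
          Set.mem_compl_iff]
        intro hx hc
        exact hc fun i hiN => hx.1 i (lt_of_lt_of_le hiN (Nat.not_lt.mp hsN))
      rw [hempty]
      simp
  calc ∫⁻ x in (cyl N)ᶜ, F x ∂muG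
      ≤ ∫⁻ x in ⋃ s, E s ∩ (cyl N)ᶜ, F x ∂muG := lintegral_mono_set hcover
    _ ≤ ∑' s, ∫⁻ x in E s ∩ (cyl N)ᶜ, F x ∂muG := lintegral_iUnion_le _ _
    _ ≤ ∑' s, ENNReal.ofReal ((2 : ℝ) ^ p) * (ENNReal.ofReal r) ^ s :=
        ENNReal.tsum_le_tsum term_bound
    _ = ENNReal.ofReal ((2 : ℝ) ^ p) * (1 - ENNReal.ofReal r)⁻¹ := by
        rw [ENNReal.tsum_mul_left, ENNReal.tsum_geometric]
    _ = ENNReal.ofReal ((2 : ℝ) ^ p * (1 - r)⁻¹) := by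
        have h1 : (1 : ℝ≥0∞) - ENNReal.ofReal r = ENNReal.ofReal (1 - r) := by
          rw [ENNReal.ofReal_sub _ hr0.le, ENNReal.ofReal_one]
        rw [ENNReal.ofReal_mul h2p.le, h1, ← ENNReal.ofReal_inv_of_pos (by linarith)]

end Dev

theorem stmt9 (p : ℝ) (hp : 0 < p) (hp1 : p < 1) :
    ∃ c : ℝ, 0 < c ∧ ∀ (N : ℕ) (a : G2 → ℝ), Measurable a →
      (∀ x : G2, x ∉ cyl N → a x = 0) →
      (∀ x : G2, |a x| ≤ (2 : ℝ) ^ ((N : ℝ) / p)) →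
      (∫ x, a x ∂muG) = 0 →
      ∫⁻ x in (cyl N)ᶜ,
          (⨆ n : ℕ, (‖funS a n x‖₊ : ℝ≥0∞) / ENNReal.ofReal (((n : ℝ) + 1) ^ (1 / p - 1))) ^ p
          ∂muG ≤ ENNReal.ofReal c := by
  exact Dev.stmt9' p hp hp1

end
end

section
/- Let 0 < p < 1, f ∈ H_p(G), and 2^k < n ≤ 2^{k+1}. Then ‖S_n f − f‖_{H_p} ≤ c_p · n^{1/p − 1} · ω(1/2^k, f)_{H_p}, where ω(1/2^k, f)_{H_p} := ‖f − S_{2^k} f‖_{H_p} is the H_p-modulus of continuity. -/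
open MeasureTheory ENNReal Filter
open scoped Classical

noncomputable section

-- Auxiliary development
namespace Stmt13

/-- flip of coordinate `j` -/
def eps (j : ℕ) : G2 := fun i => if i = j then 1 else 0

lemma neg_one_pow_zmod_add_one (v : ZMod 2) :
    (-1 : ℝ) ^ ((v + 1).val) = -(-1 : ℝ) ^ (v.val) := by
  fin_cases v
  · show (-1:ℝ)^1 = -(-1:ℝ)^0; norm_num
  · show (-1:ℝ)^0 = -(-1:ℝ)^1; norm_num

lemma rad_ne (j l : ℕ) (h : l ≠ j) (x : G2) : rad l (x + eps j) = rad l x := by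
  unfold rad eps
  simp [h]

lemma rad_flip (j : ℕ) (x : G2) : rad j (x + eps j) = - rad j x := by
  have hx : (x + eps j) j = x j + 1 := by simp [eps]
  unfold rad
  rw [hx, neg_one_pow_zmod_add_one]

lemma abs_rad (l : ℕ) (x : G2) : |rad l x| = 1 := by
  unfold rad
  rw [abs_pow, abs_neg, abs_one, one_pow]

lemma abs_walsh (n : ℕ) (x : G2) : |walsh n x| = 1 := by
  unfold walsh
  rw [Finset.abs_prod]
  apply Finset.prod_eq_one
  intro l _
  by_cases hb : n.testBit l <;> simp [hb, abs_rad]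

lemma measurable_rad (l : ℕ) : Measurable (rad l) := by
  have h : rad l = (fun v : ZMod 2 => (-1 : ℝ) ^ (v.val)) ∘ (fun x : G2 => x l) := rfl
  rw [h]
  exact measurable_from_top.comp (measurable_pi_apply l)

lemma measurable_walsh (n : ℕ) : Measurable (walsh n) := by
  unfold walsh
  exact Finset.measurable_prod _ (fun l _ => by
    by_cases hb : n.testBit l <;> simp [hb, measurable_rad, measurable_const])

lemma measurable_mS (c : ℕ → ℝ) (m : ℕ) : Measurable (mS c m) := by
  unfold mS
  exact Finset.measurable_sum _ (fun l _ => (measurable_walsh l).const_mul _)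

end Stmt13
namespace Stmt13

lemma walsh_ext {n M : ℕ} (h : n ≤ M) (x : G2) :
    walsh n x = ∏ l ∈ Finset.range M, if n.testBit l then rad l x else 1 := by
  unfold walsh
  apply Finset.prod_subset (Finset.range_subset_range.mpr h)
  intro l hl hnl
  have hln : n ≤ l := by
    have := Finset.mem_range.not.mp hnl
    omega
  have : n.testBit l = false := Nat.testBit_lt_two_pow (lt_of_le_of_lt hln (Nat.lt_two_pow_self (n := l)))
  simp [this]

lemma walsh_prod_range {n L : ℕ} (h : n < 2 ^ L) (x : G2) :
    walsh n x = ∏ l ∈ Finset.range L, if n.testBit l then rad l x else 1 := by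
  rcases le_total n L with hnL | hLn
  · exact walsh_ext hnL x
  · rw [walsh_ext (le_refl n) x]
    symm
    apply Finset.prod_subset (Finset.range_subset_range.mpr hLn)
    intro l hl hnl
    have hLl : L ≤ l := by
      have := Finset.mem_range.not.mp hnl
      omega
    have : n.testBit l = false :=
      Nat.testBit_lt_two_pow (lt_of_lt_of_le h (Nat.pow_le_pow_right (by norm_num) hLl))
    simp [this]

lemma testBit_lt_of_true {s j l : ℕ} (hs : s < 2 ^ j) (hb : s.testBit l = true) : l < j := by
  have h1 : 2 ^ l ≤ s := Nat.ge_two_pow_of_testBit hb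
  have := lt_of_le_of_lt h1 hs
  exact (Nat.pow_lt_pow_iff_right (a := 2) (by norm_num)).mp this

lemma walsh_flip {j s : ℕ} (hs : s < 2 ^ j) (x : G2) : walsh s (x + eps j) = walsh s x := by
  unfold walsh
  apply Finset.prod_congr rfl
  intro l _
  by_cases hb : s.testBit l
  · have hlj : l < j := testBit_lt_of_true hs hb
    simp [hb, rad_ne j l (by omega)]
  · simp [hb]

lemma testBit_two_pow_add_lt {j s l : ℕ} (hs : s < 2 ^ j) (hl : l < j) :
    (2 ^ j + s).testBit l = s.testBit l := by
  have h := Nat.testBit_two_pow_mul_add 1 hs l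
  simpa [hl] using h

lemma testBit_two_pow_add_self {j s : ℕ} (hs : s < 2 ^ j) :
    (2 ^ j + s).testBit j = true := by
  have h := Nat.testBit_two_pow_mul_add 1 hs j
  simpa using h

lemma walsh_two_pow_add {j s : ℕ} (hs : s < 2 ^ j) (x : G2) :
    walsh (2 ^ j + s) x = rad j x * walsh s x := by
  have h1 : 2 ^ j + s < 2 ^ (j + 1) := by
    have : (2:ℕ) ^ (j+1) = 2 ^ j + 2 ^ j := by ring
    omega
  rw [walsh_prod_range h1, Finset.prod_range_succ, testBit_two_pow_add_self hs, if_pos rfl,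
    mul_comm, walsh_prod_range hs]
  congr 1
  apply Finset.prod_congr rfl
  intro l hl
  rw [testBit_two_pow_add_lt hs (Finset.mem_range.mp hl)]

lemma mS_flip {c : ℕ → ℝ} {m j : ℕ} (hm : m ≤ 2 ^ j) (x : G2) :
    mS c m (x + eps j) = mS c m x := by
  unfold mS
  apply Finset.sum_congr rfl
  intro s hs
  rw [walsh_flip (lt_of_lt_of_le (Finset.mem_range.mp hs) hm)]

lemma mS_split (a : ℕ → ℝ) (r' j : ℕ) {m : ℕ} (hm1 : 2 ^ j ≤ m) (hm2 : m ≤ 2 ^ (j+1)) (x : G2) :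
    mS (fun s => a (r' + s)) m x
      = mS (fun s => a (r' + s)) (2 ^ j) x
        + rad j x * mS (fun s => a (r' + 2 ^ j + s)) (m - 2 ^ j) x := by
  unfold mS
  obtain ⟨m2, rfl⟩ : ∃ m2, m = 2 ^ j + m2 := ⟨m - 2 ^ j, by omega⟩
  have hm2 : m2 ≤ 2 ^ j := by
    have : (2:ℕ) ^ (j+1) = 2 ^ j + 2 ^ j := by ring
    omega
  rw [Nat.add_sub_cancel_left, Finset.sum_range_add, Finset.mul_sum]
  congr 1
  apply Finset.sum_congr rfl
  intro u hu
  have hu2 : u < 2 ^ j := lt_of_lt_of_le (Finset.mem_range.mp hu) hm2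
  rw [walsh_two_pow_add hu2]
  simp only []
  rw [← Nat.add_assoc]
  ring

end Stmt13
namespace Stmt13

instance : muG.IsAddLeftInvariant := by unfold muG; infer_instance

lemma lintegral_flip (g : G2 → ℝ≥0∞) (e : G2) :
    ∫⁻ x, g (x + e) ∂muG = ∫⁻ x, g x ∂muG := by
  have h : ∀ x : G2, x + e = e + x := fun x => add_comm x e
  simp_rw [h]
  exact lintegral_add_left_eq_self g e

lemma meas_nnp (p : ℝ) {Q : G2 → ℝ} (hQ : Measurable Q) :
    Measurable fun x => (‖Q x‖₊ : ℝ≥0∞) ^ p :=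
  hQ.nnnorm.coe_nnreal_ennreal.pow_const p

lemma lint_half_est {p : ℝ} (hp : 0 < p) (hp1 : p < 1) {F Q : G2 → ℝ} (hQ : Measurable Q)
    (j : ℕ) (hpt : ∀ x, |F x| ≤ (|Q x| + |Q (x + eps j)|) / 2) :
    ∫⁻ x, (‖F x‖₊ : ℝ≥0∞) ^ p ∂muG
      ≤ 2 ^ ((1:ℝ) - p) * ∫⁻ x, (‖Q x‖₊ : ℝ≥0∞) ^ p ∂muG := by
  have key : ∀ x : G2, (‖F x‖₊ : ℝ≥0∞) ^ p
      ≤ 2 ^ (-p) * ((‖Q x‖₊ : ℝ≥0∞) ^ p + (‖Q (x + eps j)‖₊ : ℝ≥0∞) ^ p) := by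
    intro x
    have h1 : (‖F x‖₊ : ℝ≥0∞) ≤ 2⁻¹ * ((‖Q x‖₊ : ℝ≥0∞) + (‖Q (x + eps j)‖₊ : ℝ≥0∞)) := by
      rw [← enorm_eq_nnnorm, Real.enorm_eq_ofReal_abs, ← enorm_eq_nnnorm, Real.enorm_eq_ofReal_abs,
        ← enorm_eq_nnnorm, Real.enorm_eq_ofReal_abs]
      calc ENNReal.ofReal |F x| ≤ ENNReal.ofReal ((|Q x| + |Q (x + eps j)|) / 2) :=
            ENNReal.ofReal_le_ofReal (hpt x)
        _ = 2⁻¹ * (ENNReal.ofReal |Q x| + ENNReal.ofReal |Q (x + eps j)|) := by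
            rw [ENNReal.ofReal_div_of_pos (by norm_num), ENNReal.ofReal_add (abs_nonneg _)
              (abs_nonneg _)]
            rw [ENNReal.ofReal_ofNat, div_eq_mul_inv, mul_comm]
    calc (‖F x‖₊ : ℝ≥0∞) ^ p
        ≤ (2⁻¹ * ((‖Q x‖₊ : ℝ≥0∞) + (‖Q (x + eps j)‖₊ : ℝ≥0∞))) ^ p :=
          ENNReal.rpow_le_rpow h1 hp.le
      _ = (2:ℝ≥0∞)⁻¹ ^ p * ((‖Q x‖₊ : ℝ≥0∞) + (‖Q (x + eps j)‖₊ : ℝ≥0∞)) ^ p :=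
          ENNReal.mul_rpow_of_nonneg _ _ hp.le
      _ ≤ (2:ℝ≥0∞)⁻¹ ^ p * ((‖Q x‖₊ : ℝ≥0∞) ^ p + (‖Q (x + eps j)‖₊ : ℝ≥0∞) ^ p) := by
          gcongr
          exact ENNReal.rpow_add_le_add_rpow _ _ hp.le hp1.le
      _ = 2 ^ (-p) * ((‖Q x‖₊ : ℝ≥0∞) ^ p + (‖Q (x + eps j)‖₊ : ℝ≥0∞) ^ p) := by
          rw [ENNReal.inv_rpow, ← ENNReal.rpow_neg]
  have hmeas : Measurable fun x => (‖Q x‖₊ : ℝ≥0∞) ^ p + (‖Q (x + eps j)‖₊ : ℝ≥0∞) ^ p := by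
    exact (meas_nnp p hQ).add ((meas_nnp p hQ).comp (measurable_add_const (eps j)))
  calc ∫⁻ x, (‖F x‖₊ : ℝ≥0∞) ^ p ∂muG
      ≤ ∫⁻ x, 2 ^ (-p) * ((‖Q x‖₊ : ℝ≥0∞) ^ p + (‖Q (x + eps j)‖₊ : ℝ≥0∞) ^ p) ∂muG :=
        lintegral_mono key
    _ = 2 ^ (-p) * ∫⁻ x, ((‖Q x‖₊ : ℝ≥0∞) ^ p + (‖Q (x + eps j)‖₊ : ℝ≥0∞) ^ p) ∂muG :=
        lintegral_const_mul _ hmeas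
    _ = 2 ^ (-p) * (∫⁻ x, (‖Q x‖₊ : ℝ≥0∞) ^ p ∂muG
          + ∫⁻ x, (‖Q (x + eps j)‖₊ : ℝ≥0∞) ^ p ∂muG) := by
        rw [lintegral_add_left (meas_nnp p hQ)]
    _ = 2 ^ (-p) * (2 * ∫⁻ x, (‖Q x‖₊ : ℝ≥0∞) ^ p ∂muG) := by
        rw [lintegral_flip (fun y => (‖Q y‖₊ : ℝ≥0∞) ^ p) (eps j), two_mul]
    _ = 2 ^ ((1:ℝ) - p) * ∫⁻ x, (‖Q x‖₊ : ℝ≥0∞) ^ p ∂muG := by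
        rw [← mul_assoc]
        congr 1
        rw [sub_eq_add_neg, ENNReal.rpow_add 1 (-p) (by norm_num) (by norm_num),
          ENNReal.rpow_one, mul_comm]

end Stmt13
namespace Stmt13

lemma half_identity (a : ℕ → ℝ) (r' j : ℕ) (x : G2) :
    mS (fun s => a (r' + s)) (2 ^ (j+1)) x
      = mS (fun s => a (r' + s)) (2 ^ j) x
        + rad j x * mS (fun s => a (r' + 2 ^ j + s)) (2 ^ j) x := by
  have h := mS_split a r' j (m := 2 ^ (j+1))
    (Nat.pow_le_pow_right (by norm_num) (by omega)) (le_refl _) x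
  have h2 : (2:ℕ) ^ (j+1) - 2 ^ j = 2 ^ j := by
    rw [pow_succ]
    omega
  rwa [h2] at h

lemma half_A_pt (a : ℕ → ℝ) (r' j : ℕ) (x : G2) :
    |mS (fun s => a (r' + s)) (2 ^ j) x|
      ≤ (|mS (fun s => a (r' + s)) (2 ^ (j+1)) x|
          + |mS (fun s => a (r' + s)) (2 ^ (j+1)) (x + eps j)|) / 2 := by
  have h1 := half_identity a r' j x
  have h2 := half_identity a r' j (x + eps j)
  rw [mS_flip (le_refl _) x, mS_flip (le_refl _) x, rad_flip] at h2
  have hA : mS (fun s => a (r' + s)) (2 ^ j) x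
      = (mS (fun s => a (r' + s)) (2 ^ (j+1)) x
          + mS (fun s => a (r' + s)) (2 ^ (j+1)) (x + eps j)) / 2 := by
    rw [h1, h2]; ring
  rw [hA, abs_div, abs_two]
  gcongr
  exact abs_add_le _ _

lemma half_B_pt (a : ℕ → ℝ) (r' j : ℕ) (x : G2) :
    |mS (fun s => a (r' + 2 ^ j + s)) (2 ^ j) x|
      ≤ (|mS (fun s => a (r' + s)) (2 ^ (j+1)) x|
          + |mS (fun s => a (r' + s)) (2 ^ (j+1)) (x + eps j)|) / 2 := by
  have h1 := half_identity a r' j x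
  have h2 := half_identity a r' j (x + eps j)
  rw [mS_flip (le_refl _) x, mS_flip (le_refl _) x, rad_flip] at h2
  have hrad : |rad j x| = 1 := abs_rad j x
  have hB : |mS (fun s => a (r' + 2 ^ j + s)) (2 ^ j) x|
      = |(mS (fun s => a (r' + s)) (2 ^ (j+1)) x
          - mS (fun s => a (r' + s)) (2 ^ (j+1)) (x + eps j)) / 2| := by
    have : (mS (fun s => a (r' + s)) (2 ^ (j+1)) x
          - mS (fun s => a (r' + s)) (2 ^ (j+1)) (x + eps j)) / 2
        = rad j x * mS (fun s => a (r' + 2 ^ j + s)) (2 ^ j) x := by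
      rw [h1, h2]; ring
    rw [this, abs_mul, hrad, one_mul]
  rw [hB, abs_div, abs_two]
  gcongr
  exact abs_sub _ _

end Stmt13
namespace Stmt13

lemma block_lemma {p : ℝ} (hp : 0 < p) (hp1 : p < 1) :
    ∀ (d j r : ℕ) (a : ℕ → ℝ), 2 ^ j ∣ r → r < 2 ^ (j + d) →
    ∫⁻ x, (‖mS (fun s => a (r + s)) (2 ^ j) x‖₊ : ℝ≥0∞) ^ p ∂muG
      ≤ 2 ^ (((1:ℝ) - p) * d) * ∫⁻ x, (‖mS a (2 ^ (j + d)) x‖₊ : ℝ≥0∞) ^ p ∂muG := by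
  intro d
  induction d with
  | zero =>
    intro j r a hdvd hlt
    have hr : r = 0 := by
      rcases Nat.eq_zero_or_pos r with h | h
      · exact h
      · have h2 : 2 ^ j ≤ r := Nat.le_of_dvd h hdvd
        have h3 : r < 2 ^ j := by simpa using hlt
        omega
    subst hr
    have hfun : (fun s => a (0 + s)) = a := by funext s; rw [Nat.zero_add]
    rw [hfun]
    norm_num
  | succ d ih =>
    intro j r a hdvd hlt
    obtain ⟨q, rfl⟩ := hdvd
    have hdexp : ((1:ℝ) - p) * ((d + 1 : ℕ) : ℝ) = ((1:ℝ) - p) + ((1:ℝ) - p) * (d : ℝ) := by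
      push_cast; ring
    have hsplit2 : (2:ℝ≥0∞) ^ (((1:ℝ) - p) + ((1:ℝ) - p) * (d : ℝ))
        = 2 ^ ((1:ℝ) - p) * 2 ^ (((1:ℝ) - p) * (d : ℝ)) :=
      ENNReal.rpow_add _ _ (by norm_num) (by norm_num)
    have hexp : j + (d + 1) = (j + 1) + d := by omega
    rcases Nat.even_or_odd q with ⟨t, ht⟩ | ⟨t, ht⟩
    · -- even: 2^j * q = 2^(j+1) * t
      have hr : 2 ^ j * q = 2 ^ (j+1) * t := by
        rw [ht, pow_succ]; ring
      have hd2 : 2 ^ (j+1) ∣ 2 ^ j * q := ⟨t, hr⟩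
      have hlt2 : 2 ^ j * q < 2 ^ ((j+1) + d) := by rw [← hexp]; exact hlt
      have est := lint_half_est hp hp1 (measurable_mS (fun s => a (2 ^ j * q + s)) (2 ^ (j+1)))
        j (half_A_pt a (2 ^ j * q) j)
      have hrec := ih (j+1) (2 ^ j * q) a hd2 hlt2
      calc ∫⁻ x, (‖mS (fun s => a (2 ^ j * q + s)) (2 ^ j) x‖₊ : ℝ≥0∞) ^ p ∂muG
          ≤ 2 ^ ((1:ℝ) - p)
            * ∫⁻ x, (‖mS (fun s => a (2 ^ j * q + s)) (2 ^ (j+1)) x‖₊ : ℝ≥0∞) ^ p ∂muG := est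
        _ ≤ 2 ^ ((1:ℝ) - p) * (2 ^ (((1:ℝ) - p) * (d : ℝ))
              * ∫⁻ x, (‖mS a (2 ^ ((j+1) + d)) x‖₊ : ℝ≥0∞) ^ p ∂muG) := by gcongr
        _ = 2 ^ (((1:ℝ) - p) * ((d + 1 : ℕ) : ℝ))
              * ∫⁻ x, (‖mS a (2 ^ (j + (d+1))) x‖₊ : ℝ≥0∞) ^ p ∂muG := by
            rw [hdexp, hsplit2, hexp, mul_assoc]
    · -- odd: q = 2t+1 : r = 2^(j+1) t + 2^j
      have hr : 2 ^ j * q = 2 ^ (j+1) * t + 2 ^ j := by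
        rw [ht, pow_succ]; ring
      have hcoef : (fun s => a (2 ^ j * q + s)) = fun s => a (2 ^ (j+1) * t + 2 ^ j + s) := by
        funext s; rw [hr]
      have hd2 : 2 ^ (j+1) ∣ 2 ^ (j+1) * t := ⟨t, rfl⟩
      have hlt2 : 2 ^ (j+1) * t < 2 ^ ((j+1) + d) := by
        have := hlt
        rw [← hexp]
        omega
      have hpt : ∀ x, |mS (fun s => a (2 ^ j * q + s)) (2 ^ j) x|
          ≤ (|mS (fun s => a (2 ^ (j+1) * t + s)) (2 ^ (j+1)) x|
              + |mS (fun s => a (2 ^ (j+1) * t + s)) (2 ^ (j+1)) (x + eps j)|) / 2 := by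
        intro x
        rw [hcoef]
        exact half_B_pt a (2 ^ (j+1) * t) j x
      have est := lint_half_est hp hp1 (measurable_mS (fun s => a (2 ^ (j+1) * t + s)) (2 ^ (j+1)))
        j hpt
      have hrec := ih (j+1) (2 ^ (j+1) * t) a hd2 hlt2
      calc ∫⁻ x, (‖mS (fun s => a (2 ^ j * q + s)) (2 ^ j) x‖₊ : ℝ≥0∞) ^ p ∂muG
          ≤ 2 ^ ((1:ℝ) - p)
            * ∫⁻ x, (‖mS (fun s => a (2 ^ (j+1) * t + s)) (2 ^ (j+1)) x‖₊ : ℝ≥0∞) ^ p ∂muG := est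
        _ ≤ 2 ^ ((1:ℝ) - p) * (2 ^ (((1:ℝ) - p) * (d : ℝ))
              * ∫⁻ x, (‖mS a (2 ^ ((j+1) + d)) x‖₊ : ℝ≥0∞) ^ p ∂muG) := by gcongr
        _ = 2 ^ (((1:ℝ) - p) * ((d + 1 : ℕ) : ℝ))
              * ∫⁻ x, (‖mS a (2 ^ (j + (d+1))) x‖₊ : ℝ≥0∞) ^ p ∂muG := by
            rw [hdexp, hsplit2, hexp, mul_assoc]

end Stmt13
namespace Stmt13

lemma main_lemma {p : ℝ} (hp : 0 < p) (hp1 : p < 1) :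
    ∀ (j d r m : ℕ) (a : ℕ → ℝ), 2 ^ j ∣ r → r < 2 ^ (j + d) → m ≤ 2 ^ j →
    ∫⁻ x, (‖mS (fun s => a (r + s)) m x‖₊ : ℝ≥0∞) ^ p ∂muG
      ≤ 2 * (∑ i ∈ Finset.range (j+1), (2:ℝ≥0∞) ^ (((1:ℝ) - p) * ((d:ℝ) + (i:ℝ))))
          * ∫⁻ x, (‖mS a (2 ^ (j + d)) x‖₊ : ℝ≥0∞) ^ p ∂muG := by
  intro j
  induction j with
  | zero =>
    intro d r m a hdvd hlt hm
    have hm01 : m = 0 ∨ m = 1 := by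
      have : m ≤ 1 := by simpa using hm
      omega
    rcases hm01 with rfl | rfl
    · have h0 : ∀ x : G2, mS (fun s => a (r + s)) 0 x = 0 := by
        intro x; simp [mS]
      simp only [h0]
      rw [nnnorm_zero]
      simp only [ENNReal.coe_zero, ENNReal.zero_rpow_of_pos hp, lintegral_zero]
      exact zero_le
    · have hb := block_lemma hp hp1 d 0 r a (by simpa using hdvd) (by simpa using hlt)
      rw [pow_zero] at hb
      refine hb.trans ?_
      rw [Finset.sum_range_one]
      have he : ((1:ℝ) - p) * ((d:ℝ) + ((0:ℕ):ℝ)) = ((1:ℝ) - p) * (d:ℝ) := by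
        push_cast; ring
      rw [he]
      gcongr
      exact le_mul_of_one_le_left (zero_le) one_le_two
  | succ j ih =>
    intro d r m a hdvd hlt hm
    have hdvdj : 2 ^ j ∣ r := dvd_trans (pow_dvd_pow 2 (Nat.le_succ j)) hdvd
    have hexp : (j+1) + d = j + (d+1) := by omega
    have hltj : r < 2 ^ (j + (d+1)) := by rw [← hexp]; exact hlt
    have hsum : (∑ i ∈ Finset.range (j+2), (2:ℝ≥0∞) ^ (((1:ℝ) - p) * ((d:ℝ) + (i:ℝ))))
        = (2:ℝ≥0∞) ^ (((1:ℝ) - p) * (d:ℝ))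
          + ∑ i ∈ Finset.range (j+1), (2:ℝ≥0∞) ^ (((1:ℝ) - p) * (((d+1:ℕ):ℝ) + (i:ℝ))) := by
      rw [Finset.sum_range_succ' (fun i => (2:ℝ≥0∞) ^ (((1:ℝ) - p) * ((d:ℝ) + (i:ℝ)))) (j+1)]
      rw [add_comm]
      congr 1
      · congr 1
        push_cast; ring
      · apply Finset.sum_congr rfl
        intro i _
        congr 1
        push_cast; ring
    rcases le_or_gt m (2 ^ j) with hmj | hmj
    · have h := ih (d+1) r m a hdvdj hltj hmj
      rw [← hexp] at h
      refine h.trans ?_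
      gcongr
      rw [hsum]
      exact le_add_self
    · -- split case
      have hsplit := mS_split a r j hmj.le hm
      have hptR : ∀ x, |mS (fun s => a (r + s)) m x|
          ≤ |mS (fun s => a (r + s)) (2 ^ j) x|
            + |mS (fun s => a (r + 2 ^ j + s)) (m - 2 ^ j) x| := by
        intro x
        rw [hsplit x]
        refine (abs_add_le _ _).trans ?_
        rw [abs_mul, abs_rad, one_mul]
      have hpt : ∀ x, (‖mS (fun s => a (r + s)) m x‖₊ : ℝ≥0∞) ^ p
          ≤ (‖mS (fun s => a (r + s)) (2 ^ j) x‖₊ : ℝ≥0∞) ^ p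
            + (‖mS (fun s => a (r + 2 ^ j + s)) (m - 2 ^ j) x‖₊ : ℝ≥0∞) ^ p := by
        intro x
        have h1 : (‖mS (fun s => a (r + s)) m x‖₊ : ℝ≥0∞)
            ≤ (‖mS (fun s => a (r + s)) (2 ^ j) x‖₊ : ℝ≥0∞)
              + (‖mS (fun s => a (r + 2 ^ j + s)) (m - 2 ^ j) x‖₊ : ℝ≥0∞) := by
          rw [← enorm_eq_nnnorm, Real.enorm_eq_ofReal_abs, ← enorm_eq_nnnorm, Real.enorm_eq_ofReal_abs,
            ← enorm_eq_nnnorm, Real.enorm_eq_ofReal_abs, ← ENNReal.ofReal_add (abs_nonneg _) (abs_nonneg _)]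
          exact ENNReal.ofReal_le_ofReal (hptR x)
        exact (ENNReal.rpow_le_rpow h1 hp.le).trans
          (ENNReal.rpow_add_le_add_rpow _ _ hp.le hp1.le)
      -- integral bounds
      have hintA := block_lemma hp hp1 (d+1) j r a hdvdj hltj
      -- bound r + 2^j
      obtain ⟨u, hu⟩ := hdvd
      have hultQ : u < 2 ^ d := by
        have h3 : (2:ℕ) ^ ((j+1) + d) = 2 ^ (j+1) * 2 ^ d := pow_add 2 (j+1) d
        have : 2 ^ (j+1) * u < 2 ^ (j+1) * 2 ^ d := by rw [← hu, ← h3]; exact hlt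
        exact Nat.lt_of_mul_lt_mul_left this
      have hrlt : r + 2 ^ j < 2 ^ (j + (d+1)) := by
        have h4 : (2:ℕ) ^ j < 2 ^ (j+1) := by
          have hpos := Nat.two_pow_pos j
          rw [pow_succ]
          omega
        calc r + 2 ^ j < 2 ^ (j+1) * u + 2 ^ (j+1) := by rw [hu]; omega
          _ = 2 ^ (j+1) * (u + 1) := by ring
          _ ≤ 2 ^ (j+1) * 2 ^ d := Nat.mul_le_mul_left _ hultQ
          _ = 2 ^ (j + (d+1)) := by rw [← pow_add]; congr 1; try omega
      have hmB : m - 2 ^ j ≤ 2 ^ j := by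
        have : (2:ℕ) ^ (j+1) = 2 ^ j * 2 := pow_succ 2 j
        omega
      have hintB := ih (d+1) (r + 2 ^ j) (m - 2 ^ j) a (Dvd.dvd.add hdvdj (dvd_refl _)) hrlt hmB
      -- combine
      have hmeasA := meas_nnp p (measurable_mS (fun s => a (r + s)) (2 ^ j))
      calc ∫⁻ x, (‖mS (fun s => a (r + s)) m x‖₊ : ℝ≥0∞) ^ p ∂muG
          ≤ ∫⁻ x, ((‖mS (fun s => a (r + s)) (2 ^ j) x‖₊ : ℝ≥0∞) ^ p
              + (‖mS (fun s => a (r + 2 ^ j + s)) (m - 2 ^ j) x‖₊ : ℝ≥0∞) ^ p) ∂muG :=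
            lintegral_mono hpt
        _ = (∫⁻ x, (‖mS (fun s => a (r + s)) (2 ^ j) x‖₊ : ℝ≥0∞) ^ p ∂muG)
              + ∫⁻ x, (‖mS (fun s => a (r + 2 ^ j + s)) (m - 2 ^ j) x‖₊ : ℝ≥0∞) ^ p ∂muG :=
            lintegral_add_left hmeasA _
        _ ≤ 2 ^ (((1:ℝ) - p) * ((d+1:ℕ):ℝ))
              * (∫⁻ x, (‖mS a (2 ^ (j + (d+1))) x‖₊ : ℝ≥0∞) ^ p ∂muG)
            + 2 * (∑ i ∈ Finset.range (j+1), (2:ℝ≥0∞) ^ (((1:ℝ) - p) * (((d+1:ℕ):ℝ) + (i:ℝ))))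
              * ∫⁻ x, (‖mS a (2 ^ (j + (d+1))) x‖₊ : ℝ≥0∞) ^ p ∂muG :=
            add_le_add hintA hintB
        _ ≤ 2 * (∑ i ∈ Finset.range ((j+1)+1), (2:ℝ≥0∞) ^ (((1:ℝ) - p) * ((d:ℝ) + (i:ℝ))))
              * ∫⁻ x, (‖mS a (2 ^ ((j+1) + d)) x‖₊ : ℝ≥0∞) ^ p ∂muG := by
            rw [hexp, hsum]
            have hc : (2:ℝ≥0∞) ^ (((1:ℝ) - p) * ((d+1:ℕ):ℝ))
                ≤ 2 * (2:ℝ≥0∞) ^ (((1:ℝ) - p) * (d:ℝ)) := by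
              have he2 : ((1:ℝ) - p) * ((d+1:ℕ):ℝ) = ((1:ℝ) - p) * (d:ℝ) + ((1:ℝ) - p) := by
                push_cast; ring
              rw [he2, ENNReal.rpow_add _ _ (by norm_num) (by norm_num), mul_comm]
              gcongr
              calc (2:ℝ≥0∞) ^ ((1:ℝ) - p) ≤ 2 ^ (1:ℝ) :=
                    ENNReal.rpow_le_rpow_of_exponent_le one_le_two (by linarith)
                _ = 2 := ENNReal.rpow_one 2
            rw [← add_mul, mul_add]
            apply mul_le_mul_left
            exact add_le_add hc (le_refl _)

end Stmt13
namespace Stmt13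

lemma geom_bound {p : ℝ} (hp : 0 < p) (hp1 : p < 1) (N : ℕ) :
    (∑ i ∈ Finset.range (N+1), (2:ℝ≥0∞) ^ (((1:ℝ) - p) * (i:ℝ)))
      ≤ (2:ℝ≥0∞) ^ (((1:ℝ) - p) * (N:ℝ)) * (1 - (2:ℝ≥0∞) ^ (p - 1))⁻¹ := by
  rw [← Finset.sum_range_reflect (fun i => (2:ℝ≥0∞) ^ (((1:ℝ) - p) * (i:ℝ))) (N+1)]
  have hterm : ∀ i ∈ Finset.range (N+1),
      (2:ℝ≥0∞) ^ (((1:ℝ) - p) * (((N + 1 - 1 - i : ℕ)):ℝ))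
        = (2:ℝ≥0∞) ^ (((1:ℝ) - p) * (N:ℝ)) * ((2:ℝ≥0∞) ^ (p - 1)) ^ i := by
    intro i hi
    have hiN : i ≤ N := by
      have := Finset.mem_range.mp hi; omega
    have hcast : (((N + 1 - 1 - i : ℕ)):ℝ) = (N:ℝ) - (i:ℝ) := by
      have h1 : N + 1 - 1 - i = N - i := by omega
      rw [h1, Nat.cast_sub hiN]
    rw [hcast]
    have he : ((1:ℝ) - p) * ((N:ℝ) - (i:ℝ)) = ((1:ℝ) - p) * (N:ℝ) + (p - 1) * (i:ℝ) := by
      ring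
    rw [he, ENNReal.rpow_add _ _ (by norm_num) (by norm_num)]
    congr 1
    rw [ENNReal.rpow_mul, ENNReal.rpow_natCast]
  rw [Finset.sum_congr rfl hterm, ← Finset.mul_sum]
  gcongr
  refine (ENNReal.sum_le_tsum _).trans ?_
  rw [ENNReal.tsum_geometric]

end Stmt13
namespace Stmt13

lemma mMax_bound (f : ℕ → ℝ) (k n : ℕ) (hkn : 2 ^ k < n) (hnk : n ≤ 2 ^ (k+1)) (x : G2) :
    mMax (fun j => if j < n then 0 else f j) x
      ≤ mMax (fun j => if j < 2 ^ k then 0 else f j) x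
        + (‖mS (fun j => if j < 2 ^ k then 0 else f j) n x‖₊ : ℝ≥0∞) := by
  set c1 : ℕ → ℝ := fun j => if j < n then 0 else f j with hc1
  set c2 : ℕ → ℝ := fun j => if j < 2 ^ k then 0 else f j with hc2
  apply iSup_le
  intro m
  rcases le_or_gt n (2 ^ m) with hnm | hnm
  · have h2 : mS c1 (2 ^ m) x = ∑ i ∈ Finset.Ico n (2 ^ m), c1 i * walsh i x := by
      unfold mS
      symm
      apply Finset.sum_subset
      · intro i hi
        rw [Finset.mem_range]
        exact (Finset.mem_Ico.mp hi).2
      · intro i _ hni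
        rw [Finset.mem_range] at *
        have : i < n := by
          rcases Nat.lt_or_ge i n with h | h
          · exact h
          · exact absurd (Finset.mem_Ico.mpr ⟨h, by omega⟩) hni
        simp [hc1, this]
    have h3 : ∑ i ∈ Finset.Ico n (2 ^ m), c1 i * walsh i x
        = ∑ i ∈ Finset.Ico n (2 ^ m), c2 i * walsh i x := by
      apply Finset.sum_congr rfl
      intro i hi
      have hni : n ≤ i := (Finset.mem_Ico.mp hi).1
      have e1 : c1 i = f i := by simp [hc1]; omega
      have e2 : c2 i = f i := by simp [hc2]; omega
      rw [e1, e2]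
    have h4 : ∑ i ∈ Finset.Ico n (2 ^ m), c2 i * walsh i x
        = mS c2 (2 ^ m) x - mS c2 n x := by
      rw [Finset.sum_Ico_eq_sub _ hnm]
      rfl
    have hid : mS c1 (2 ^ m) x = mS c2 (2 ^ m) x - mS c2 n x := by
      rw [h2, h3, h4]
    rw [hid]
    calc (‖mS c2 (2 ^ m) x - mS c2 n x‖₊ : ℝ≥0∞)
        ≤ (‖mS c2 (2 ^ m) x‖₊ : ℝ≥0∞) + (‖mS c2 n x‖₊ : ℝ≥0∞) := by
          rw [← ENNReal.coe_add]
          exact_mod_cast nnnorm_sub_le _ _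
      _ ≤ mMax c2 x + (‖mS c2 n x‖₊ : ℝ≥0∞) := by
          gcongr
          exact le_iSup (fun m => (‖mS c2 (2 ^ m) x‖₊ : ℝ≥0∞)) m
  · have hz : mS c1 (2 ^ m) x = 0 := by
      unfold mS
      apply Finset.sum_eq_zero
      intro i hi
      have : i < n := lt_trans (Finset.mem_range.mp hi) hnm
      simp [hc1, this]
    rw [hz, nnnorm_zero]
    simp only [ENNReal.coe_zero]
    exact zero_le

end Stmt13
namespace Stmt13

lemma final_integral {p : ℝ} (hp : 0 < p) (hp1 : p < 1) (f : ℕ → ℝ) (k n : ℕ)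
    (hkn : 2 ^ k < n) (hnk : n ≤ 2 ^ (k+1)) :
    ∫⁻ x, (mMax (fun j => if j < n then 0 else f j) x) ^ p ∂muG
      ≤ (1 + 4 * (1 - (2:ℝ≥0∞) ^ (p - 1))⁻¹) * ((n:ℝ≥0∞) ^ ((1:ℝ) - p))
          * ∫⁻ x, (mMax (fun j => if j < 2 ^ k then 0 else f j) x) ^ p ∂muG := by
  set c1 : ℕ → ℝ := fun j => if j < n then 0 else f j with hc1
  set c2 : ℕ → ℝ := fun j => if j < 2 ^ k then 0 else f j with hc2
  set K : ℝ≥0∞ := (1 - (2:ℝ≥0∞) ^ (p - 1))⁻¹ with hK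
  have hmeas2 : Measurable fun x => (mMax c2 x) ^ p := by
    apply Measurable.pow_const
    exact Measurable.iSup (fun m => (measurable_mS c2 (2 ^ m)).nnnorm.coe_nnreal_ennreal)
  -- step 1 : I1 ≤ I2 + Ih
  have hstep1 : ∫⁻ x, (mMax c1 x) ^ p ∂muG
      ≤ (∫⁻ x, (mMax c2 x) ^ p ∂muG) + ∫⁻ x, (‖mS c2 n x‖₊ : ℝ≥0∞) ^ p ∂muG := by
    have hpt : ∀ x, (mMax c1 x) ^ p
        ≤ (mMax c2 x) ^ p + (‖mS c2 n x‖₊ : ℝ≥0∞) ^ p := by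
      intro x
      refine (ENNReal.rpow_le_rpow (mMax_bound f k n hkn hnk x) hp.le).trans ?_
      exact ENNReal.rpow_add_le_add_rpow _ _ hp.le hp1.le
    refine (lintegral_mono hpt).trans ?_
    rw [lintegral_add_left hmeas2]
  -- step 2 : Ih bound via main_lemma
  have hfun0 : (fun s => c2 (0 + s)) = c2 := by funext s; rw [Nat.zero_add]
  have hml := main_lemma hp hp1 (k+1) 0 0 n c2 (dvd_zero _) (Nat.two_pow_pos _) hnk
  rw [hfun0] at hml
  -- sum simplification
  have hsumeq : (∑ i ∈ Finset.range (k+1+1), (2:ℝ≥0∞) ^ (((1:ℝ) - p) * (((0:ℕ):ℝ) + (i:ℝ))))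
      = ∑ i ∈ Finset.range (k+2), (2:ℝ≥0∞) ^ (((1:ℝ) - p) * (i:ℝ)) := by
    apply Finset.sum_congr rfl
    intro i _
    congr 1
    push_cast; ring
  rw [hsumeq] at hml
  have hgeom := geom_bound hp hp1 (k+1)
  -- 2^((1-p)(k+1)) ≤ 2^(1-p) * n^(1-p)
  have hpow : (2:ℝ≥0∞) ^ (((1:ℝ) - p) * ((k+1:ℕ):ℝ))
      ≤ (2:ℝ≥0∞) ^ ((1:ℝ) - p) * ((n:ℝ≥0∞) ^ ((1:ℝ) - p)) := by
    have h1 : (2:ℝ≥0∞) ^ (((1:ℝ) - p) * ((k+1:ℕ):ℝ))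
        = (((2 ^ (k+1) : ℕ) : ℝ≥0∞)) ^ ((1:ℝ) - p) := by
      rw [mul_comm, ENNReal.rpow_mul, ENNReal.rpow_natCast]
      congr 1
      push_cast
      ring
    rw [h1, ← ENNReal.mul_rpow_of_nonneg _ _ (by linarith : (0:ℝ) ≤ 1 - p)]
    apply ENNReal.rpow_le_rpow _ (by linarith)
    calc ((2 ^ (k+1) : ℕ) : ℝ≥0∞) ≤ ((2 * n : ℕ) : ℝ≥0∞) := by
          refine Nat.cast_le.mpr ?_
          rw [pow_succ]
          omega
      _ = 2 * (n:ℝ≥0∞) := by push_cast; ring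
  have h2le : (2:ℝ≥0∞) ^ ((1:ℝ) - p) ≤ 2 := by
    calc (2:ℝ≥0∞) ^ ((1:ℝ) - p) ≤ 2 ^ (1:ℝ) :=
          ENNReal.rpow_le_rpow_of_exponent_le one_le_two (by linarith)
      _ = 2 := ENNReal.rpow_one 2
  -- pointwise: ‖mS c2 2^(k+1)‖^p ≤ (mMax c2)^p
  have hfull : ∫⁻ x, (‖mS c2 (2 ^ (k+1)) x‖₊ : ℝ≥0∞) ^ p ∂muG
      ≤ ∫⁻ x, (mMax c2 x) ^ p ∂muG := by
    apply lintegral_mono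
    intro x
    apply ENNReal.rpow_le_rpow _ hp.le
    exact le_iSup (fun m => (‖mS c2 (2 ^ m) x‖₊ : ℝ≥0∞)) (k+1)
  have hIh : ∫⁻ x, (‖mS c2 n x‖₊ : ℝ≥0∞) ^ p ∂muG
      ≤ 4 * K * ((n:ℝ≥0∞) ^ ((1:ℝ) - p)) * ∫⁻ x, (mMax c2 x) ^ p ∂muG := by
    refine hml.trans ?_
    calc 2 * (∑ i ∈ Finset.range (k+2), (2:ℝ≥0∞) ^ (((1:ℝ) - p) * (i:ℝ)))
          * ∫⁻ x, (‖mS c2 (2 ^ (k+1+0)) x‖₊ : ℝ≥0∞) ^ p ∂muG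
        ≤ 2 * ((2:ℝ≥0∞) ^ (((1:ℝ) - p) * ((k+1:ℕ):ℝ)) * K)
          * ∫⁻ x, (mMax c2 x) ^ p ∂muG := by
          exact mul_le_mul' (mul_le_mul' (le_refl 2) hgeom) hfull
      _ ≤ 2 * ((2:ℝ≥0∞) ^ ((1:ℝ) - p) * ((n:ℝ≥0∞) ^ ((1:ℝ) - p)) * K)
          * ∫⁻ x, (mMax c2 x) ^ p ∂muG := by gcongr
      _ ≤ 2 * (2 * ((n:ℝ≥0∞) ^ ((1:ℝ) - p)) * K)
          * ∫⁻ x, (mMax c2 x) ^ p ∂muG := by gcongr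
      _ = 4 * K * ((n:ℝ≥0∞) ^ ((1:ℝ) - p)) * ∫⁻ x, (mMax c2 x) ^ p ∂muG := by
          ring_nf
  -- n^(1-p) ≥ 1
  have hn1 : (1:ℝ≥0∞) ≤ (n:ℝ≥0∞) ^ ((1:ℝ) - p) := by
    have hn : (1:ℝ≥0∞) ≤ (n:ℝ≥0∞) := by
      refine le_trans ?_ (Nat.cast_le.mpr (show 1 ≤ n by have := Nat.two_pow_pos k; omega))
      norm_num
    calc (1:ℝ≥0∞) = 1 ^ ((1:ℝ) - p) := (ENNReal.one_rpow _).symm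
      _ ≤ (n:ℝ≥0∞) ^ ((1:ℝ) - p) := ENNReal.rpow_le_rpow hn (by linarith)
  calc ∫⁻ x, (mMax c1 x) ^ p ∂muG
      ≤ (∫⁻ x, (mMax c2 x) ^ p ∂muG) + ∫⁻ x, (‖mS c2 n x‖₊ : ℝ≥0∞) ^ p ∂muG := hstep1
    _ ≤ (∫⁻ x, (mMax c2 x) ^ p ∂muG)
        + 4 * K * ((n:ℝ≥0∞) ^ ((1:ℝ) - p)) * ∫⁻ x, (mMax c2 x) ^ p ∂muG := by gcongr
    _ ≤ ((n:ℝ≥0∞) ^ ((1:ℝ) - p)) * (∫⁻ x, (mMax c2 x) ^ p ∂muG)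
        + 4 * K * ((n:ℝ≥0∞) ^ ((1:ℝ) - p)) * ∫⁻ x, (mMax c2 x) ^ p ∂muG := by
        gcongr
        exact le_mul_of_one_le_left (zero_le) hn1
    _ = (1 + 4 * K) * ((n:ℝ≥0∞) ^ ((1:ℝ) - p)) * ∫⁻ x, (mMax c2 x) ^ p ∂muG := by
        ring_nf

end Stmt13
theorem stmt13 (p : ℝ) (hp : 0 < p) (hp1 : p < 1) :
    ∃ c : ℝ, 0 < c ∧ ∀ (f : ℕ → ℝ) (k n : ℕ), 2 ^ k < n → n ≤ 2 ^ (k + 1) →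
      mHp p (fun j => if j < n then 0 else f j) ≤
        ENNReal.ofReal (c * (n : ℝ) ^ (1 / p - 1)) *
          mHp p (fun j => if j < 2 ^ k then 0 else f j) := by
  classical
  have h2p1 : (0:ℝ) < 1 - (2:ℝ) ^ (p - 1) := by
    have : (2:ℝ) ^ (p - 1) < 1 :=
      Real.rpow_lt_one_of_one_lt_of_neg one_lt_two (by linarith)
    linarith
  set Kr : ℝ := (1 - (2:ℝ) ^ (p - 1))⁻¹ with hKr
  have hKr_pos : 0 < Kr := inv_pos.mpr h2p1
  set Cr : ℝ := 1 + 4 * Kr with hCr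
  have hCr_pos : 0 < Cr := by positivity
  refine ⟨Cr ^ (1 / p), Real.rpow_pos_of_pos hCr_pos _, ?_⟩
  intro f k n hkn hnk
  -- ENNReal constants
  have hKe : (1 - (2:ℝ≥0∞) ^ (p - 1))⁻¹ = ENNReal.ofReal Kr := by
    have h2 : (2:ℝ≥0∞) ^ (p - 1) = ENNReal.ofReal ((2:ℝ) ^ (p - 1)) := by
      rw [← ENNReal.ofReal_rpow_of_pos (by norm_num : (0:ℝ) < 2)]
      norm_num
    rw [h2, hKr, ENNReal.ofReal_inv_of_pos h2p1]
    congr 1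
    rw [← ENNReal.ofReal_one, ← ENNReal.ofReal_sub _ (by positivity : (0:ℝ) ≤ (2:ℝ) ^ (p-1))]
    try rw [ENNReal.ofReal_one]
  have hCe : (1 + 4 * (1 - (2:ℝ≥0∞) ^ (p - 1))⁻¹) = ENNReal.ofReal Cr := by
    rw [hKe, hCr, ENNReal.ofReal_add (by norm_num) (by positivity),
      ENNReal.ofReal_mul (by norm_num)]
    norm_num
  have hint := Stmt13.final_integral hp hp1 f k n hkn hnk
  have h1p : (0:ℝ) ≤ 1 / p := by positivity
  have hn0 : 0 < n := by
    have := Nat.two_pow_pos k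
    omega
  have hnpos : (0:ℝ) < (n:ℝ) := by exact_mod_cast hn0
  calc mHp p (fun j => if j < n then 0 else f j)
      = (∫⁻ x, (mMax (fun j => if j < n then 0 else f j) x) ^ p ∂muG) ^ (1/p) := rfl
    _ ≤ (((1 + 4 * (1 - (2:ℝ≥0∞) ^ (p - 1))⁻¹) * ((n:ℝ≥0∞) ^ ((1:ℝ) - p)))
          * ∫⁻ x, (mMax (fun j => if j < 2 ^ k then 0 else f j) x) ^ p ∂muG) ^ (1/p) :=
        ENNReal.rpow_le_rpow hint h1p
    _ = ((1 + 4 * (1 - (2:ℝ≥0∞) ^ (p - 1))⁻¹) ^ (1/p) * ((n:ℝ≥0∞) ^ ((1:ℝ) - p)) ^ (1/p))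
          * mHp p (fun j => if j < 2 ^ k then 0 else f j) := by
        rw [ENNReal.mul_rpow_of_nonneg _ _ h1p, ENNReal.mul_rpow_of_nonneg _ _ h1p]
        rfl
    _ = ENNReal.ofReal (Cr ^ (1 / p) * (n : ℝ) ^ (1 / p - 1))
          * mHp p (fun j => if j < 2 ^ k then 0 else f j) := by
        congr 1
        rw [hCe]
        rw [← ENNReal.rpow_mul]
        have he : ((1:ℝ) - p) * (1/p) = 1/p - 1 := by field_simp
        rw [he]
        rw [ENNReal.ofReal_mul (by positivity)]
        congr 1
        · rw [← ENNReal.ofReal_rpow_of_pos hCr_pos]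
        · rw [← ENNReal.ofReal_rpow_of_pos hnpos, ENNReal.ofReal_natCast]
end
end
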